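/- Let F_q have characteristic p, let g ∈ F_q[X] be monic irreducible of order e with g(0) ≠ 0, let r = p^d for some integer d ≥ 0, and let s be a sequence with minimal polynomial g^{r+1}. Set s' := (L^e − 1)^r s. Then s' is nonzero with minimal polynomial g, and for every η ∈ {0, 1, …, p − 1} one has L^{η·e·r} s = s + η·s' (the scalar η taken in the prime subfield F_p of F_q). In particular, the p sequences s + η s' for η ∈ {0, …, p − 1} are pairwise shift equivalent. -/

import Mathlib

open Polynomial

/-- The (left) shift operator `L` on sequences over `F`, as an `F`-linear endomorphism. -/
def shiftL (F : Type*) [CommSemiring F] : Module.End F (ℕ → F) where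
  toFun s := fun i => s (i + 1)
  map_add' _ _ := rfl
  map_smul' _ _ := rfl

/-- For a polynomial `f`, the operator `f(L)` on sequences. -/
noncomputable def polyL {F : Type*} [CommSemiring F] (f : Polynomial F) :
    Module.End F (ℕ → F) :=
  Polynomial.aeval (shiftL F) f

/-- `Ω(f)`: the set of sequences annihilated by `f(L)`. -/
def OmegaSet {F : Type*} [CommSemiring F] (f : Polynomial F) : Set (ℕ → F) :=
  {s | polyL f s = 0}

/-- Two sequences are shift equivalent if one is a shift of the other. -/
def ShiftEquiv {F : Type*} [CommSemiring F] (s s' : ℕ → F) : Prop :=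
  ∃ ℓ : ℕ, s' = (shiftL F ^ ℓ) s

/-- The cycle (shift-equivalence class) of a sequence. -/
def seqCycle {F : Type*} [CommSemiring F] (s : ℕ → F) : Set (ℕ → F) :=
  {s' | ∃ ℓ : ℕ, s' = (shiftL F ^ ℓ) s}

/-- `N` is the least period of the sequence `s`. -/
def IsLeastPeriod {F : Type*} (s : ℕ → F) (N : ℕ) : Prop :=
  0 < N ∧ (∀ i, s (i + N) = s i) ∧ ∀ M : ℕ, 0 < M → (∀ i, s (i + M) = s i) → N ≤ M

/-- `h` is the minimal polynomial of the sequence `s`: it is monic, annihilates `s`,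
and divides every polynomial annihilating `s`. -/
def IsMinPolyOfSeq {F : Type*} [CommSemiring F] (s : ℕ → F) (h : Polynomial F) : Prop :=
  h.Monic ∧ polyL h s = 0 ∧ ∀ h' : Polynomial F, polyL h' s = 0 → h ∣ h'

/-- `e = ord(f)`: the least `N ≥ 1` with `f ∣ X^N - 1`. -/
def IsOrderOf {F : Type*} [CommRing F] (f : Polynomial F) (e : ℕ) : Prop :=
  0 < e ∧ f ∣ X ^ e - 1 ∧ ∀ N : ℕ, 0 < N → f ∣ X ^ N - 1 → e ≤ N

/-- let `r = p^d`, `s` have minimal polynomial `g^{r+1}` and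
`s' = (L^e − 1)^r s` where `e = ord(g)`. Then `s'` is nonzero with minimal polynomial `g`,
`L^{η·e·r} s = s + η·s'` for `0 ≤ η < p`, and the `p` sequences `s + η s'` are pairwise
shift equivalent. -/
theorem stmt10 {F : Type*} [Field F] [Fintype F] (p : ℕ) (hp : p.Prime) [CharP F p]
    (g : Polynomial F) (hmonic : g.Monic) (hirr : Irreducible g) (hg0 : g.coeff 0 ≠ 0)
    (e : ℕ) (he : IsOrderOf g e)
    (d r : ℕ) (hr : r = p ^ d)
    (s : ℕ → F) (hs : IsMinPolyOfSeq s (g ^ (r + 1)))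
    (s' : ℕ → F) (hs' : s' = ((shiftL F ^ e - 1) ^ r) s) :
    s' ≠ 0 ∧ IsMinPolyOfSeq s' g ∧
    (∀ η : ℕ, η < p → (shiftL F ^ (η * e * r)) s = s + (η : F) • s') ∧
    (∀ η₁ : ℕ, η₁ < p → ∀ η₂ : ℕ, η₂ < p →
      ShiftEquiv (s + (η₁ : F) • s') (s + (η₂ : F) • s')) := by
  classical
  have factp : Fact p.Prime := ⟨hp⟩
  have hprime : Prime g := hirr.prime
  have hgne : g ≠ 0 := hmonic.ne_zero
  have hrpos : 0 < r := by rw [hr]; exact pow_pos hp.pos d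
  set T := shiftL F with hT
  -- p does not divide e
  have hpe : ¬ (p ∣ e) := by
    intro hdvd
    obtain ⟨e', he'⟩ := hdvd
    have he'pos : 0 < e' := by
      rcases Nat.eq_zero_or_pos e' with h | h
      · exfalso; rw [h, Nat.mul_zero] at he'; exact absurd he' (Nat.pos_iff_ne_zero.mp he.1)
      · exact h
    have hfac : (X : Polynomial F) ^ e - 1 = (X ^ e' - 1) ^ p := by
      rw [sub_pow_char, one_pow, ← pow_mul, he', mul_comm]
    have hgd : g ∣ (X : Polynomial F) ^ e' - 1 :=
      hprime.dvd_of_dvd_pow (hfac ▸ he.2.1)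
    have hle := he.2.2 e' he'pos hgd
    have hp2 := hp.two_le
    nlinarith [he.1]
  have heF : (e : F) ≠ 0 := by
    rw [Ne, CharP.cast_eq_zero_iff F p e]; exact hpe
  -- factor X^e - 1 = g * u with g not dividing u
  obtain ⟨u, hu⟩ := he.2.1
  have hgu : ¬ g ∣ u := by
    intro hdvd
    obtain ⟨v, hv⟩ := hdvd
    have hf : (X : Polynomial F) ^ e - 1 = g * (g * v) := by rw [hu, hv]
    have hder : derivative ((X : Polynomial F) ^ e - 1) = C (e : F) * X ^ (e - 1) := by
      simp [derivative_X_pow]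
    have hdvd2 : g ∣ C (e : F) * X ^ (e - 1) :=
      ⟨derivative g * v + derivative (g * v), by rw [← hder, hf, derivative_mul]; ring⟩
    have hdvd3 : g ∣ (X : Polynomial F) ^ (e - 1) := by
      have h1 := hdvd2.mul_left (C (e : F)⁻¹)
      have h2 : C (e : F)⁻¹ * (C (e : F) * X ^ (e - 1)) = X ^ (e - 1) := by
        rw [← mul_assoc, ← C_mul, inv_mul_cancel₀ heF, C_1, one_mul]
      rw [h2] at h1
      exact h1
    exact absurd hdvd3 (by intro h; exact hg0 (by
      have hgX : g ∣ (X : Polynomial F) := hprime.dvd_of_dvd_pow h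
      have hassoc : Associated g (X : Polynomial F) :=
        hirr.associated_of_dvd Polynomial.irreducible_X hgX
      have : g = X := Polynomial.eq_of_monic_of_associated hmonic Polynomial.monic_X hassoc
      rw [this, coeff_X_zero]))
  -- basic operator facts
  have polyL_mul : ∀ (a b : Polynomial F) (t : ℕ → F),
      polyL (a * b) t = polyL a (polyL b t) := by
    intro a b t
    simp only [polyL, map_mul, Module.End.mul_apply]
  have hann : ∀ h' : Polynomial F, g ^ (r + 1) ∣ h' → polyL h' s = 0 := by
    rintro h' ⟨w, hw⟩
    rw [hw, mul_comm, polyL_mul, hs.2.1, map_zero]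
  have hXer : ((X : Polynomial F) ^ e - 1) ^ r = X ^ (e * r) - 1 := by
    rw [hr, sub_pow_char_pow, one_pow, ← pow_mul]
  have hops : polyL (((X : Polynomial F) ^ e - 1) ^ r) = (T ^ e - 1) ^ r := by
    simp only [polyL, map_pow, map_sub, aeval_X, map_one]
    rfl
  have hs'2 : s' = polyL (((X : Polynomial F) ^ e - 1) ^ r) s := by
    rw [hs', hops]
  -- s' ≠ 0
  have hs'ne : s' ≠ 0 := by
    intro h0
    have hdvd : g ^ (r + 1) ∣ ((X : Polynomial F) ^ e - 1) ^ r :=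
      hs.2.2 _ (by rw [← hs'2, h0])
    rw [hu, mul_pow] at hdvd
    rw [pow_succ] at hdvd
    have : g ∣ u ^ r := (mul_dvd_mul_iff_left (pow_ne_zero r hgne)).mp hdvd
    exact hgu (hprime.dvd_of_dvd_pow this)
  -- g annihilates s'
  have hgs' : polyL g s' = 0 := by
    rw [hs'2, ← polyL_mul]
    apply hann
    refine ⟨u ^ r, ?_⟩
    rw [hu, mul_pow, pow_succ]
    ring
  -- minimal polynomial of s' is g
  have hminp : IsMinPolyOfSeq s' g := by
    refine ⟨hmonic, hgs', ?_⟩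
    intro h' hh'
    have h1 : polyL (h' * ((X : Polynomial F) ^ e - 1) ^ r) s = 0 := by
      rw [polyL_mul, ← hs'2, hh']
    have h2 : g ^ (r + 1) ∣ h' * ((X : Polynomial F) ^ e - 1) ^ r := hs.2.2 _ h1
    rw [hu, mul_pow, pow_succ] at h2
    have h3 : g ^ r * g ∣ g ^ r * (h' * u ^ r) := by
      rw [show g ^ r * (h' * u ^ r) = h' * (g ^ r * u ^ r) by ring]; exact h2
    have h4 : g ∣ h' * u ^ r := (mul_dvd_mul_iff_left (pow_ne_zero r hgne)).mp h3
    rcases hprime.dvd_mul.mp h4 with h | h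
    · exact h
    · exact absurd (hprime.dvd_of_dvd_pow h) hgu
  -- shift identities
  have hoper : polyL ((X : Polynomial F) ^ (e * r) - 1) = T ^ (e * r) - 1 := by
    simp only [polyL, map_sub, map_pow, aeval_X, map_one]
    rfl
  have hTer_s : (T ^ (e * r)) s = s + s' := by
    have h2 : s' = (T ^ (e * r) - 1) s := by rw [hs'2, hXer, hoper]
    rw [LinearMap.sub_apply, Module.End.one_apply] at h2
    rw [eq_sub_iff_add_eq] at h2
    rw [← h2]; abel
  have hTer_s' : (T ^ (e * r)) s' = s' := by
    have hd : g ∣ (X : Polynomial F) ^ (e * r) - 1 := by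
      have h1 : g ∣ (X : Polynomial F) ^ e - 1 := ⟨u, hu⟩
      have h2 : ((X : Polynomial F) ^ e - 1) ∣ ((X : Polynomial F) ^ e - 1) ^ r :=
        dvd_pow_self _ hrpos.ne'
      exact (h1.trans h2).trans hXer.dvd
    obtain ⟨w, hw⟩ := hd
    have h0 : polyL ((X : Polynomial F) ^ (e * r) - 1) s' = 0 := by
      rw [hw, mul_comm, polyL_mul, hgs', map_zero]
    rw [hoper, LinearMap.sub_apply, Module.End.one_apply, sub_eq_zero] at h0
    exact h0
  have key : ∀ m : ℕ, (T ^ (m * e * r)) s = s + (m : F) • s' := by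
    intro m
    induction m with
    | zero => simp
    | succ n ih =>
      have hm : (n + 1) * e * r = e * r + n * e * r := by ring
      rw [hm, pow_add, Module.End.mul_apply, ih, map_add, LinearMap.map_smul,
        hTer_s, hTer_s']
      push_cast
      rw [add_smul, one_smul]
      abel
  have key' : ∀ m : ℕ, (T ^ (m * e * r)) s' = s' := by
    intro m
    induction m with
    | zero => simp
    | succ n ih =>
      have hm : (n + 1) * e * r = e * r + n * e * r := by ring
      rw [hm, pow_add, Module.End.mul_apply, ih, hTer_s']
  refine ⟨hs'ne, hminp, fun η _ => key η, ?_⟩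
  intro η₁ h₁ η₂ h₂
  refine ⟨(η₂ + p - η₁) * e * r, ?_⟩
  rw [map_add, LinearMap.map_smul, key, key']
  have hcast : ((η₂ + p - η₁ : ℕ) : F) = (η₂ : F) - (η₁ : F) := by
    have hle : η₁ ≤ η₂ + p := le_trans h₁.le (Nat.le_add_left p η₂)
    have : ((η₂ + p - η₁ : ℕ) : F) + (η₁ : F) = ((η₂ + p : ℕ) : F) := by
      rw [← Nat.cast_add, Nat.sub_add_cancel hle]
    rw [eq_sub_iff_add_eq, this]
    push_cast
    rw [CharP.cast_eq_zero F p, add_zero]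
  rw [hcast, sub_smul]
  abel
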